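/- arXiv:2410.02192 — 3 statements merged into one kernel-verified Lean document; each statement's English description precedes it below -/
import Mathlib

section
/- Let F ∈ ℝ^{n×n} be symmetric positive definite and T ∈ ℝ^{m×n} (m ≤ n) have full row rank. Then every eigenvalue of the block matrix A = [[-F, -Tᵀ],[T, 0]] has strictly negative real part (A is Hurwitz). -/
open Matrix
open scoped ComplexOrder

private lemma hurwitz_aux_inj {n m : ℕ} (T : Matrix (Fin m) (Fin n) ℝ) (hT : T.rank = m) :
    Function.Injective (Tᵀ.mulVec) := by
  rw [← Matrix.coe_mulVecLin]
  rw [← LinearMap.ker_eq_bot]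
  have h1 : Tᵀ.rank = m := by rw [Matrix.rank_transpose]; exact hT
  have hrn := LinearMap.finrank_range_add_finrank_ker (Tᵀ.mulVecLin)
  rw [Matrix.rank] at h1
  rw [h1, Module.finrank_fintype_fun_eq_card, Fintype.card_fin] at hrn
  have h0 : Module.finrank ℝ (LinearMap.ker Tᵀ.mulVecLin) = 0 := by omega
  exact Submodule.finrank_eq_zero.mp h0

theorem hurwitz_block_matrix (n m : ℕ) (hm : m ≤ n)
    (F : Matrix (Fin n) (Fin n) ℝ) (hF : F.PosDef)
    (T : Matrix (Fin m) (Fin n) ℝ) (hT : T.rank = m)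
    (A : Matrix (Fin n ⊕ Fin m) (Fin n ⊕ Fin m) ℝ)
    (hA : A = Matrix.fromBlocks (-F) (-Tᵀ) T 0) :
    ∀ s ∈ spectrum ℂ (A.map (algebraMap ℝ ℂ)), s.re < 0 := by
  intro s hs
  subst hA
  set f : ℝ →+* ℂ := algebraMap ℝ ℂ with hf
  set M := ((fromBlocks (-F) (-Tᵀ) T 0).map (algebraMap ℝ ℂ)) with hM
  rw [spectrum.mem_iff] at hs
  have hdet : ((algebraMap ℂ (Matrix (Fin n ⊕ Fin m) (Fin n ⊕ Fin m) ℂ) s) - M).det = 0 := by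
    by_contra h
    exact hs ((Matrix.isUnit_iff_isUnit_det _).mpr (isUnit_iff_ne_zero.mpr h))
  obtain ⟨v, hv0, hveq⟩ := (Matrix.exists_mulVec_eq_zero_iff).mpr hdet
  have hMv : M *ᵥ v = s • v := by
    rw [sub_mulVec] at hveq
    have h1 : (algebraMap ℂ (Matrix (Fin n ⊕ Fin m) (Fin n ⊕ Fin m) ℂ) s) *ᵥ v = s • v := by
      funext i
      simp [Matrix.algebraMap_eq_diagonal, Matrix.mulVec_diagonal]
    rw [h1, sub_eq_zero] at hveq
    exact hveq.symm
  set x : Fin n → ℂ := v ∘ Sum.inl with hx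
  set y : Fin m → ℂ := v ∘ Sum.inr with hy
  have hblock : M = fromBlocks ((-F).map f) ((-Tᵀ).map f) (T.map f) ((0 : Matrix (Fin m) (Fin m) ℝ).map f) := by
    rw [hM, Matrix.fromBlocks_map]
  rw [hblock, fromBlocks_mulVec] at hMv
  have hnegF : (-F).map ⇑f = -(F.map ⇑f) := by
    ext i j; simp
  have hnegT : (-Tᵀ).map ⇑f = -(Tᵀ.map ⇑f) := by
    ext i j; simp
  have heq1 : -(F.map ⇑f) *ᵥ x + -(Tᵀ.map ⇑f) *ᵥ y = s • x := by
    funext i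
    have h := congrFun hMv (Sum.inl i)
    rw [hnegF, hnegT] at h
    simpa [hx, hy] using h
  have heq2 : (T.map ⇑f) *ᵥ x = s • y := by
    funext i
    have h := congrFun hMv (Sum.inr i)
    have hz : (0 : Matrix (Fin m) (Fin m) ℝ).map ⇑f = 0 := by ext i j; simp
    rw [hz] at h
    simpa [hx, hy] using h
  -- x ≠ 0
  have hxne : x ≠ 0 := by
    intro hx0
    have hTy : (Tᵀ.map ⇑f) *ᵥ y = 0 := by
      have h := heq1
      rw [hx0] at h
      simp only [mulVec_zero, smul_zero, zero_add, neg_mulVec, neg_zero] at h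
      exact neg_eq_zero.mp h
    -- real and imaginary parts
    have hre : Tᵀ *ᵥ (fun j => (y j).re) = 0 := by
      funext i
      have h2 := congrArg Complex.re (congrFun hTy i)
      simpa [mulVec, dotProduct, Complex.re_sum, hf, Complex.ofReal_re, Complex.ofReal_im,
        Complex.mul_re, Finset.sum_sub_distrib] using h2
    have him : Tᵀ *ᵥ (fun j => (y j).im) = 0 := by
      funext i
      have h2 := congrArg Complex.im (congrFun hTy i)
      simpa [mulVec, dotProduct, Complex.im_sum, hf, Complex.ofReal_re, Complex.ofReal_im,
        Complex.mul_im] using h2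
    have hinj := hurwitz_aux_inj T hT
    have hre0 : (fun j => (y j).re) = 0 := by
      apply hinj; rw [hre, mulVec_zero]
    have him0 : (fun j => (y j).im) = 0 := by
      apply hinj; rw [him, mulVec_zero]
    apply hv0
    funext i
    cases i with
    | inl i => exact congrFun hx0 i
    | inr i =>
      have h1 := congrFun hre0 i
      have h2 := congrFun him0 i
      exact Complex.ext h1 h2
  -- scalar identities
  set c : ℂ := star x ⬝ᵥ ((F.map f) *ᵥ x) with hc
  set a : ℂ := star x ⬝ᵥ ((Tᵀ.map f) *ᵥ y) with ha
  set b : ℂ := star y ⬝ᵥ ((T.map f) *ᵥ x) with hb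
  set nx : ℂ := star x ⬝ᵥ x with hnx
  set ny : ℂ := star y ⬝ᵥ y with hny
  have h1 : -c - a = s * nx := by
    have h := congrArg (fun w => star x ⬝ᵥ w) heq1
    simp only [dotProduct_add, neg_mulVec, dotProduct_neg, dotProduct_smul, smul_eq_mul] at h
    rw [hc, ha, hnx]
    linear_combination h
  have h2 : b = s * ny := by
    have h := congrArg (fun w => star y ⬝ᵥ w) heq2
    simp only [dotProduct_smul, smul_eq_mul] at h
    rw [hb, hny]
    linear_combination h
  have hab : b = (starRingEnd ℂ) a := by
    rw [ha, hb]
    simp only [dotProduct, mulVec, dotProduct, map_sum, _root_.map_mul, Pi.star_apply, RingHom.coe_coe,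
      Matrix.map_apply, transpose_apply, RCLike.star_def, Complex.conj_conj, Complex.conj_ofReal, hf, Complex.coe_algebraMap,
      Finset.mul_sum]
    rw [Finset.sum_comm]
    refine Finset.sum_congr rfl fun i _ => Finset.sum_congr rfl fun j _ => by ring
  -- real parts of nx, ny
  have hnxpos : 0 < nx.re ∧ nx.im = 0 := by
    have hle : (0 : ℂ) ≤ nx := dotProduct_star_self_nonneg x
    have hne : nx ≠ 0 := fun h => hxne (dotProduct_star_self_eq_zero.mp h)
    have hlt : (0 : ℂ) < nx := lt_of_le_of_ne hle (Ne.symm hne)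
    rw [Complex.lt_def] at hlt
    exact ⟨by simpa using hlt.1, by simpa using hlt.2.symm⟩
  have hnyn : 0 ≤ ny.re ∧ ny.im = 0 := by
    have hle : (0 : ℂ) ≤ ny := dotProduct_star_self_nonneg y
    rw [Complex.le_def] at hle
    exact ⟨by simpa using hle.1, by simpa using hle.2.symm⟩
  -- re of c is positive
  have hcre : 0 < c.re := by
    have hcre' : c.re = (fun i => (x i).re) ⬝ᵥ (F *ᵥ (fun i => (x i).re))
        + (fun i => (x i).im) ⬝ᵥ (F *ᵥ (fun i => (x i).im)) := by
      rw [hc]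
      simp only [dotProduct, mulVec, Matrix.map_apply, Finset.mul_sum, Pi.star_apply,
        RCLike.star_def, Complex.re_sum]
      rw [← Finset.sum_add_distrib]
      refine Finset.sum_congr rfl fun i _ => ?_
      rw [← Finset.sum_add_distrib]
      refine Finset.sum_congr rfl fun j _ => ?_
      simp only [hf, Complex.coe_algebraMap, Complex.mul_re, Complex.mul_im, Complex.conj_re,
        Complex.conj_im, Complex.ofReal_re, Complex.ofReal_im]
      ring
    have hcases : (fun i => (x i).re) ≠ 0 ∨ (fun i => (x i).im) ≠ 0 := by
      by_contra h
      push_neg at h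
      apply hxne
      funext i
      exact Complex.ext (congrFun h.1 i) (congrFun h.2 i)
    have hsd := hF.posSemidef
    have hrterm : 0 ≤ (fun i => (x i).re) ⬝ᵥ (F *ᵥ (fun i => (x i).re)) := by
      simpa using hsd.dotProduct_mulVec_nonneg (fun i => (x i).re)
    have hiterm : 0 ≤ (fun i => (x i).im) ⬝ᵥ (F *ᵥ (fun i => (x i).im)) := by
      simpa using hsd.dotProduct_mulVec_nonneg (fun i => (x i).im)
    rcases hcases with h | h
    · have := hF.dotProduct_mulVec_pos h
      simp only [star_trivial] at this
      rw [hcre']; linarith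
    · have := hF.dotProduct_mulVec_pos h
      simp only [star_trivial] at this
      rw [hcre']; linarith
  -- conclude
  have hsum : s * (nx + ny) = -c + ((starRingEnd ℂ) a - a) := by
    rw [mul_add, ← h1, ← h2, hab]
    ring
  have hre := congrArg Complex.re hsum
  simp only [Complex.mul_re, Complex.add_re, Complex.add_im, Complex.neg_re,
    Complex.sub_re, Complex.conj_re, hnxpos.2, hnyn.2, add_zero, mul_zero, sub_zero,
    sub_self] at hre
  -- hre : s.re * (nx.re + ny.re) = -c.re
  have hN : 0 < nx.re + ny.re := by linarith [hnxpos.1, hnyn.1]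
  nlinarith [hre, hN, hcre]
end

section
/- Let F ∈ ℝ^{n×n} be symmetric positive definite and T ∈ ℝ^{m×n} have full row rank. If s is a purely imaginary eigenvalue of A = [[-F, -Tᵀ],[T, 0]] with eigenvector z = (x, λ), then x = 0 and λ = 0, a contradiction; hence A has no eigenvalues on the imaginary axis. -/
open Matrix

lemma det_ne_zero_of_rank_eq {m : ℕ} (M : Matrix (Fin m) (Fin m) ℝ) (h : M.rank = m) :
    M.det ≠ 0 := by
  intro hdet
  obtain ⟨v, hv, hMv⟩ := (Matrix.exists_mulVec_eq_zero_iff).mpr hdet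
  -- rank = m means mulVecLin surjective hence injective
  have hrange : LinearMap.range M.mulVecLin = ⊤ := by
    apply Submodule.eq_top_of_finrank_eq
    rw [← Matrix.rank, h]
    simp [Module.finrank_pi]
  have hinj : Function.Injective M.mulVecLin :=
    LinearMap.injective_iff_surjective.mpr (LinearMap.range_eq_top.mp hrange)
  exact hv (by simpa using hinj (a₁ := v) (a₂ := 0) (by simpa using hMv))

lemma posdef_complex {n : ℕ} {F : Matrix (Fin n) (Fin n) ℝ} (hF : F.PosDef)
    (x : Fin n → ℂ) (hx : x ≠ 0) :
    0 < (star x ⬝ᵥ (F.map (algebraMap ℝ ℂ)) *ᵥ x).re := by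
  set a : Fin n → ℝ := fun i => (x i).re with ha
  set b : Fin n → ℝ := fun i => (x i).im with hb
  have key : (star x ⬝ᵥ (F.map (algebraMap ℝ ℂ)) *ᵥ x).re
      = a ⬝ᵥ F *ᵥ a + b ⬝ᵥ F *ᵥ b := by
    simp only [dotProduct, mulVec, Pi.star_apply, map_apply, Complex.re_sum,
      Finset.mul_sum, ← Finset.sum_add_distrib]
    refine Finset.sum_congr rfl fun i _ => ?_
    refine Finset.sum_congr rfl fun k _ => ?_
    simp [Complex.mul_re, Complex.mul_im, Complex.coe_algebraMap, ha, hb]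
  rw [key]
  have hab : a ≠ 0 ∨ b ≠ 0 := by
    by_contra hc
    push_neg at hc
    apply hx
    funext i
    have h1 := congrFun hc.1 i
    have h2 := congrFun hc.2 i
    exact Complex.ext (by simpa [ha] using h1) (by simpa [hb] using h2)
  have nn : ∀ v : Fin n → ℝ, 0 ≤ v ⬝ᵥ F *ᵥ v := fun v => by
    simpa using hF.posSemidef.dotProduct_mulVec_nonneg v
  have pp : ∀ v : Fin n → ℝ, v ≠ 0 → 0 < v ⬝ᵥ F *ᵥ v := fun v hv => by
    simpa using hF.dotProduct_mulVec_pos hv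
  rcases hab with h | h
  · exact add_pos_of_pos_of_nonneg (pp a h) (nn b)
  · exact add_pos_of_nonneg_of_pos (nn a) (pp b h)

theorem no_imaginary_axis_eigenvalues (n m : ℕ)
    (F : Matrix (Fin n) (Fin n) ℝ) (hF : F.PosDef)
    (T : Matrix (Fin m) (Fin n) ℝ) (hT : T.rank = m)
    (A : Matrix (Fin n ⊕ Fin m) (Fin n ⊕ Fin m) ℝ)
    (hA : A = Matrix.fromBlocks (-F) (-Tᵀ) T 0) :
    (∀ (s : ℂ) (z : Fin n ⊕ Fin m → ℂ), s.re = 0 → z ≠ 0 →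
      (A.map (algebraMap ℝ ℂ)) *ᵥ z = s • z →
      ((fun i : Fin n => z (Sum.inl i)) = 0 ∧ (fun i : Fin m => z (Sum.inr i)) = 0) ∧ False) ∧
    ∀ s ∈ spectrum ℂ (A.map (algebraMap ℝ ℂ)), s.re ≠ 0 := by
  subst hA
  set φ := algebraMap ℝ ℂ
  set Fc := F.map φ with hFc
  set Tc := T.map φ with hTc
  have key : ∀ (s : ℂ) (z : Fin n ⊕ Fin m → ℂ), s.re = 0 → z ≠ 0 →
      ((Matrix.fromBlocks (-F) (-Tᵀ) T 0).map φ) *ᵥ z = s • z → False := by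
    intro s z hs hz heq
    set x : Fin n → ℂ := fun i => z (Sum.inl i) with hx
    set y : Fin m → ℂ := fun j => z (Sum.inr j) with hy
    have hzel : z = Sum.elim x y := by funext w; cases w <;> rfl
    rw [hzel, Matrix.fromBlocks_map, Matrix.fromBlocks_mulVec] at heq
    have eq1 : -(Fc *ᵥ x) + -((Tᵀ.map φ) *ᵥ y) = s • x := by
      funext i
      have h := congrFun heq (Sum.inl i)
      have hFneg : (-F).map ⇑φ = -(F.map ⇑φ) := by ext i j; simp
      have hTneg : (-Tᵀ).map ⇑φ = -(Tᵀ.map ⇑φ) := by ext i j; simp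
      simpa [hFneg, hTneg, Matrix.neg_mulVec, hFc] using h
    have eq2 : Tc *ᵥ x = s • y := by
      funext j
      have h := congrFun heq (Sum.inr j)
      have h0 : (0 : Matrix (Fin m) (Fin m) ℝ).map ⇑φ = 0 := by ext i j; simp
      simpa [h0, hTc] using h
    have e1 : -(star x ⬝ᵥ (Fc *ᵥ x)) + -(star x ⬝ᵥ ((Tᵀ.map φ) *ᵥ y)) = s * (star x ⬝ᵥ x) := by
      have h := congrArg (fun v => star x ⬝ᵥ v) eq1
      simpa [dotProduct_add, dotProduct_neg, dotProduct_smul, smul_eq_mul] using h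
    have e2 : star y ⬝ᵥ (Tc *ᵥ x) = s * (star y ⬝ᵥ y) := by
      have h := congrArg (fun v => star y ⬝ᵥ v) eq2
      simpa [dotProduct_smul, smul_eq_mul] using h
    have hbc : star x ⬝ᵥ ((Tᵀ.map φ) *ᵥ y) = star (star y ⬝ᵥ (Tc *ᵥ x)) := by
      simp only [dotProduct, mulVec, map_apply, star_sum, star_mul', Pi.star_apply,
        Finset.mul_sum, transpose_apply, star_star, hTc]
      rw [Finset.sum_comm]
      refine Finset.sum_congr rfl fun j _ => Finset.sum_congr rfl fun i _ => ?_
      rw [show star (φ (T j i)) = φ (T j i) from Complex.conj_ofReal _]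
      ring
    have hbeta : (star x ⬝ᵥ x).im = 0 := by
      simp only [dotProduct, Complex.im_sum, Pi.star_apply, RCLike.star_def, Complex.mul_im]
      exact Finset.sum_eq_zero fun i _ => by
        simp [Complex.conj_re, Complex.conj_im]; ring
    have hgamma : (star y ⬝ᵥ y).im = 0 := by
      simp only [dotProduct, Complex.im_sum, Pi.star_apply, RCLike.star_def, Complex.mul_im]
      exact Finset.sum_eq_zero fun i _ => by
        simp [Complex.conj_re, Complex.conj_im]; ring
    have halpha : (star x ⬝ᵥ (Fc *ᵥ x)).re = 0 := by
      have hh : star x ⬝ᵥ (Fc *ᵥ x) = -(s * (star x ⬝ᵥ x)) - star (s * (star y ⬝ᵥ y)) := by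
        rw [← e2, ← hbc]
        linear_combination -e1
      rw [hh]
      simp [Complex.mul_re, hs, hbeta, hgamma]
    have hx0 : x = 0 := by
      by_contra hxne
      exact absurd halpha (ne_of_gt (posdef_complex hF x hxne))
    have hTy : (Tᵀ.map φ) *ᵥ y = 0 := by
      have h := eq1
      rw [hx0] at h
      simp only [Matrix.mulVec_zero, neg_zero, zero_add, smul_zero] at h
      exact neg_eq_zero.mp h
    have hTTy : ((T * Tᵀ).map φ) *ᵥ y = 0 := by
      rw [Matrix.map_mul, ← hTc, ← Matrix.mulVec_mulVec, hTy, Matrix.mulVec_zero]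
    have hdet : (T * Tᵀ).det ≠ 0 := by
      apply det_ne_zero_of_rank_eq
      rw [Matrix.rank_self_mul_transpose, hT]
    have hdetC : ((T * Tᵀ).map φ).det ≠ 0 := by
      have hmm : (T * Tᵀ).map ⇑φ = φ.mapMatrix (T * Tᵀ) := rfl
      rw [hmm, ← RingHom.map_det]
      exact fun h => hdet ((algebraMap ℝ ℂ).injective (by simpa using h))
    have hy0 : y = 0 := by
      by_contra hyne
      exact hdetC ((Matrix.exists_mulVec_eq_zero_iff).mp ⟨y, hyne, hTTy⟩)
    apply hz
    rw [hzel, hx0, hy0]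
    funext w; cases w <;> rfl
  constructor
  · intro s z hs hz heq
    exact absurd (key s z hs hz heq) not_false
  · intro s hsmem hs
    rw [spectrum.mem_iff, Matrix.isUnit_iff_isUnit_det] at hsmem
    have hdet0 : (algebraMap ℂ (Matrix (Fin n ⊕ Fin m) (Fin n ⊕ Fin m) ℂ) s
        - (Matrix.fromBlocks (-F) (-Tᵀ) T 0).map φ).det = 0 := by
      by_contra h
      exact hsmem (isUnit_iff_ne_zero.mpr h)
    obtain ⟨v, hv, hMv⟩ := (Matrix.exists_mulVec_eq_zero_iff).mpr hdet0
    apply key s v hs hv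
    have hzero : s • v - ((Matrix.fromBlocks (-F) (-Tᵀ) T 0).map φ) *ᵥ v = 0 := by
      have h := hMv
      rw [Matrix.sub_mulVec, Matrix.algebraMap_eq_diagonal] at h
      rwa [show Matrix.diagonal (algebraMap ℂ ((Fin n ⊕ Fin m) → ℂ) s) *ᵥ v = s • v from by
        funext i; simp [Matrix.mulVec_diagonal]] at h
    linear_combination (norm := module) -hzero
end

section
/- If f : ℝⁿ → ℝ is convex and differentiable with l-Lipschitz gradient (l > 0), then f is co-coercive: (∇f(x) − ∇f(y))ᵀ(x − y) ≥ (1/l)‖∇f(x) − ∇f(y)‖² for all x, y ∈ ℝⁿ. -/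
open scoped RealInnerProductSpace
open InnerProductSpace intervalIntegral

variable {E : Type*} [NormedAddCommGroup E] [InnerProductSpace ℝ E] [CompleteSpace E]

-- derivative of t ↦ f (x + t • v)
lemma line_hasDerivAt (f : E → ℝ) (f' : E → E) (hf : ∀ z, HasGradientAt f (f' z) z)
    (x v : E) (t : ℝ) :
    HasDerivAt (fun s : ℝ => f (x + s • v)) ⟪f' (x + t • v), v⟫ t := by
  have hγ : HasDerivAt (fun s : ℝ => x + s • v) v t := by
    simpa using ((hasDerivAt_id t).smul_const v).const_add x
  have := ((hf (x + t • v)).hasFDerivAt).comp_hasDerivAt t hγ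
  simpa [InnerProductSpace.toDual_apply_apply, Function.comp_def] using this

-- gradient inequality from convexity
lemma grad_ineq (f : E → ℝ) (f' : E → E) (hf : ∀ z, HasGradientAt f (f' z) z)
    (hconv : ConvexOn ℝ Set.univ f) (x y : E) :
    f x + ⟪f' x, y - x⟫ ≤ f y := by
  set g : ℝ → ℝ := fun s => f (x + s • (y - x)) with hg
  have hgc : ConvexOn ℝ Set.univ g := by
    have := hconv.comp_affineMap (AffineMap.lineMap x y : ℝ →ᵃ[ℝ] E)
    have he : g = f ∘ (AffineMap.lineMap x y : ℝ →ᵃ[ℝ] E) := by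
      funext s
      simp only [g, Function.comp_apply, AffineMap.lineMap_apply_module]
      congr 1
      module
    rw [he]
    simpa using this
  have hd : HasDerivAt g ⟪f' x, y - x⟫ 0 := by
    simpa using line_hasDerivAt f f' hf x (y - x) 0
  have := hgc.le_slope_of_hasDerivAt (Set.mem_univ (0:ℝ)) (Set.mem_univ (1:ℝ))
    one_pos hd
  rw [slope_def_field] at this
  simp [g] at this
  linarith

-- descent lemma
lemma descent_lemma (f : E → ℝ) (f' : E → E) (hf : ∀ z, HasGradientAt f (f' z) z)
    {l : ℝ} (hl : 0 < l) (hlip : ∀ a b, ‖f' a - f' b‖ ≤ l * ‖a - b‖) (x y : E) :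
    f y ≤ f x + ⟪f' x, y - x⟫ + l / 2 * ‖y - x‖ ^ 2 := by
  set v := y - x with hv
  have hcont : Continuous f' := by
    have : LipschitzWith (Real.toNNReal l) f' := by
      apply LipschitzWith.of_dist_le_mul
      intro a b
      rw [dist_eq_norm, dist_eq_norm]
      simpa [Real.coe_toNNReal _ hl.le] using hlip a b
    exact this.continuous
  have hderiv : ∀ t : ℝ, HasDerivAt (fun s : ℝ => f (x + s • v)) ⟪f' (x + t • v), v⟫ t :=
    line_hasDerivAt f f' hf x v
  have hcont2 : Continuous fun t : ℝ => ⟪f' (x + t • v), v⟫ := by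
    apply Continuous.inner
    · exact hcont.comp (continuous_const.add (continuous_id.smul continuous_const))
    · exact continuous_const
  have hftc : f (x + (1:ℝ) • v) - f (x + (0:ℝ) • v)
      = ∫ t in (0:ℝ)..1, ⟪f' (x + t • v), v⟫ := by
    exact (intervalIntegral.integral_eq_sub_of_hasDerivAt (fun t _ => hderiv t)
      (hcont2.intervalIntegrable 0 1)).symm
  have hbound : ∀ t ∈ Set.Icc (0:ℝ) 1,
      ⟪f' (x + t • v), v⟫ ≤ ⟪f' x, v⟫ + l * ‖v‖ ^ 2 * t := by
    intro t ht
    have h1 : ⟪f' (x + t • v) - f' x, v⟫ ≤ ‖f' (x + t • v) - f' x‖ * ‖v‖ :=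
      real_inner_le_norm _ _
    have h2 : ‖f' (x + t • v) - f' x‖ ≤ l * (t * ‖v‖) := by
      have := hlip (x + t • v) x
      simpa [norm_smul, abs_of_nonneg ht.1] using this
    have h3 : ‖f' (x + t • v) - f' x‖ * ‖v‖ ≤ l * (t * ‖v‖) * ‖v‖ :=
      mul_le_mul_of_nonneg_right h2 (norm_nonneg _)
    have h4 : ⟪f' (x + t • v), v⟫ - ⟪f' x, v⟫ = ⟪f' (x + t • v) - f' x, v⟫ := by
      rw [inner_sub_left]
    nlinarith [sq_nonneg ‖v‖]
  have hint : (∫ t in (0:ℝ)..1, ⟪f' (x + t • v), v⟫)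
      ≤ ∫ t in (0:ℝ)..1, (⟪f' x, v⟫ + l * ‖v‖ ^ 2 * t) := by
    apply intervalIntegral.integral_mono_on zero_le_one
      (hcont2.intervalIntegrable 0 1)
      ((continuous_const.add (continuous_const.mul continuous_id)).intervalIntegrable 0 1)
    exact hbound
  have hval : (∫ t in (0:ℝ)..1, (⟪f' x, v⟫ + l * ‖v‖ ^ 2 * t))
      = ⟪f' x, v⟫ + l / 2 * ‖v‖ ^ 2 := by
    rw [intervalIntegral.integral_add (intervalIntegrable_const)
      ((intervalIntegrable_id).const_mul _)]
    rw [intervalIntegral.integral_const_mul, integral_id]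
    simp
    ring
  have h0 : x + (0:ℝ) • v = x := by simp
  have h1 : x + (1:ℝ) • v = y := by simp [hv]
  rw [h0, h1] at hftc
  linarith [hint.trans_eq hval, hftc.ge.trans_eq' rfl]

lemma strong_lower (f : E → ℝ) (f' : E → E) (hf : ∀ z, HasGradientAt f (f' z) z)
    (hconv : ConvexOn ℝ Set.univ f)
    {l : ℝ} (hl : 0 < l) (hlip : ∀ a b, ‖f' a - f' b‖ ≤ l * ‖a - b‖) (x y : E) :
    f x + ⟪f' x, y - x⟫ + 1 / (2 * l) * ‖f' y - f' x‖ ^ 2 ≤ f y := by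
  set g := f' y - f' x with hgdef
  set z := y - (1 / l) • g with hzdef
  have h1 := grad_ineq f f' hf hconv x z
  have h2 := descent_lemma f f' hf hl hlip y z
  have hzy : z - y = -((1 / l) • g) := by rw [hzdef]; abel
  have hzx : z - x = (y - x) - (1 / l) • g := by rw [hzdef]; abel
  have e1 : ⟪f' y, z - y⟫ = -(1 / l * ⟪f' y, g⟫) := by
    rw [hzy, inner_neg_right, real_inner_smul_right]
  have e2 : ‖z - y‖ ^ 2 = (1 / l) ^ 2 * ‖g‖ ^ 2 := by
    rw [hzy, norm_neg, norm_smul]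
    simp [abs_of_nonneg (by positivity : (0:ℝ) ≤ 1 / l), mul_pow]
  have e3 : ⟪f' x, z - x⟫ = ⟪f' x, y - x⟫ - 1 / l * ⟪f' x, g⟫ := by
    rw [hzx, inner_sub_right, real_inner_smul_right]
  have e4 : ⟪f' y, g⟫ - ⟪f' x, g⟫ = ‖g‖ ^ 2 := by
    rw [← inner_sub_left, ← hgdef, real_inner_self_eq_norm_sq]
  have key : l / 2 * ((1/l)^2 * ‖g‖^2) + 1/l * ‖g‖^2 - (1/(2*l)) * ‖g‖^2
      = 1/l * ‖g‖^2 := by field_simp; ring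
  have e4' : 1/l * ⟪f' y, g⟫ - 1/l * ⟪f' x, g⟫ = 1/l * ‖g‖^2 := by
    rw [← mul_sub, e4]
  have e2' : l / 2 * ‖z - y‖ ^ 2 = 1/(2*l) * ‖g‖^2 := by
    rw [e2]
    field_simp
  have key2 : 1/l * ‖g‖^2 = 2 * (1/(2*l) * ‖g‖^2) := by
    rw [← mul_assoc]
    congr 1
    field_simp
  linarith [h1, h2, e1, e2', e3, e4', key2]

theorem baillon_haddad_cocoercivity (n : ℕ) (l : ℝ) (hl : 0 < l)
    (f : EuclideanSpace ℝ (Fin n) → ℝ) (f' : EuclideanSpace ℝ (Fin n) → EuclideanSpace ℝ (Fin n))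
    (hgrad : ∀ x, HasGradientAt f (f' x) x)
    (hconv : ConvexOn ℝ Set.univ f)
    (hlip : ∀ x y, ‖f' x - f' y‖ ≤ l * ‖x - y‖) :
    ∀ x y : EuclideanSpace ℝ (Fin n),
      ⟪f' x - f' y, x - y⟫ ≥ (1 / l) * ‖f' x - f' y‖ ^ 2 := by
  intro x y
  have h1 := strong_lower f f' hgrad hconv hl hlip x y
  have h2 := strong_lower f f' hgrad hconv hl hlip y x
  have e1 : ⟪f' x - f' y, x - y⟫ = ⟪f' x, x - y⟫ - ⟪f' y, x - y⟫ := by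
    rw [inner_sub_left]
  have e2 : ⟪f' x, y - x⟫ = -⟪f' x, x - y⟫ := by
    rw [← inner_neg_right]; congr 1; abel
  have e3 : ‖f' y - f' x‖ = ‖f' x - f' y‖ := norm_sub_rev _ _
  have e4 : ‖f' x - f' y‖ = ‖f' y - f' x‖ := norm_sub_rev _ _
  have key : 1/(2*l) * ‖f' x - f' y‖^2 + 1/(2*l) * ‖f' x - f' y‖^2
      = 1/l * ‖f' x - f' y‖^2 := by
    rw [← add_mul, ← add_div]
    congr 1
    rw [div_eq_div_iff (by positivity) hl.ne']
    ring
  rw [e3] at h1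
  linarith [h1, h2, e1, e2, key]
end
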